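/- Let m, n ≥ 3 be natural numbers. Then k_m ⊆ k_n if and only if Q(ζ_m) ⊆ Q(ζ_n) or m ∈ {3, 4, 6}. -/

import Mathlib

/-- `ζ_n = e^{2πi/n}`, a primitive `n`-th root of unity in `ℂ`. -/
noncomputable def zeta (n : ℕ) : ℂ := Complex.exp (2 * Real.pi * Complex.I / n)

/-- The `n`-th cyclotomic field `ℚ(ζ_n)`, as a subfield of `ℂ`. -/
noncomputable def cyclField (n : ℕ) : IntermediateField ℚ ℂ :=
  IntermediateField.adjoin ℚ {zeta n}

/-- The maximal real subfield `k_n = ℚ(ζ_n + ζ_n⁻¹)` of `ℚ(ζ_n)`. -/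
noncomputable def realCyclField (n : ℕ) : IntermediateField ℚ ℂ :=
  IntermediateField.adjoin ℚ {zeta n + (zeta n)⁻¹}

open IntermediateField Polynomial

/-! ### Elementary facts about `zeta` -/

lemma zeta_prim {n : ℕ} (hn : n ≠ 0) : IsPrimitiveRoot (zeta n) n :=
  Complex.isPrimitiveRoot_exp n hn

lemma zeta_ne_zero (n : ℕ) : zeta n ≠ 0 := Complex.exp_ne_zero _

lemma zeta_pow_div {m N : ℕ} (hm : m ≠ 0) (hN : N ≠ 0) (h : m ∣ N) :
    (zeta N) ^ (N / m) = zeta m := by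
  rw [zeta, zeta, ← Complex.exp_nat_mul]
  congr 1
  have h1 : ((N / m : ℕ) : ℂ) * m = N := by
    rw [← Nat.cast_mul, Nat.div_mul_cancel h]
  have hm' : (m : ℂ) ≠ 0 := Nat.cast_ne_zero.2 hm
  have hN' : (N : ℂ) ≠ 0 := Nat.cast_ne_zero.2 hN
  field_simp
  exact h1

lemma conj_zeta (n : ℕ) : (starRingEnd ℂ) (zeta n) = (zeta n)⁻¹ := by
  rw [zeta, ← Complex.exp_conj, ← Complex.exp_neg]
  congr 1
  simp [map_div₀, Complex.conj_I, map_ofNat]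
  ring

lemma zeta_add_inv (m : ℕ) : zeta m + (zeta m)⁻¹ = 2 * Real.cos (2 * Real.pi / m) := by
  have harg : 2 * Real.pi * Complex.I / m = ((2 * Real.pi / m : ℝ) : ℂ) * Complex.I := by
    push_cast
    ring
  rw [zeta, harg, ← Complex.exp_neg, ← neg_mul, Complex.exp_mul_I, Complex.exp_mul_I,
    Complex.cos_neg, Complex.sin_neg, Complex.ofReal_cos]
  ring

lemma zeta_add_inv_rat (m : ℕ) (hm : m = 3 ∨ m = 4 ∨ m = 6) :
    ∃ q : ℚ, zeta m + (zeta m)⁻¹ = (q : ℂ) := by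
  rcases hm with rfl | rfl | rfl
  · refine ⟨-1, ?_⟩
    rw [zeta_add_inv]
    have : 2 * Real.pi / (3 : ℕ) = Real.pi - Real.pi / 3 := by push_cast; ring
    rw [this, Real.cos_pi_sub, Real.cos_pi_div_three]
    norm_num
  · refine ⟨0, ?_⟩
    rw [zeta_add_inv]
    have : 2 * Real.pi / (4 : ℕ) = Real.pi / 2 := by push_cast; ring
    rw [this, Real.cos_pi_div_two]
    norm_num
  · refine ⟨1, ?_⟩
    rw [zeta_add_inv]
    have : 2 * Real.pi / (6 : ℕ) = Real.pi / 3 := by push_cast; ring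
    rw [this, Real.cos_pi_div_three]
    norm_num

/-! ### A quadratic-roots lemma -/

lemma quad_root {F : Type*} [Field F] {z w : F} (hz : z ≠ 0) (hw : w ≠ 0)
    (h : z + z⁻¹ = w + w⁻¹) : z = w ∨ z = w⁻¹ := by
  have key : (z - w) * (z * w - 1) * (z * w) = 0 := by
    have h2 : (z + z⁻¹) * (z * w) = (w + w⁻¹) * (z * w) := by rw [h]
    field_simp at h2
    linear_combination (z * w) * h2
  rcases mul_eq_zero.1 key with h1 | h1
  rcases mul_eq_zero.1 h1 with h1 | h1
  · exact Or.inl (by linear_combination h1)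
  · exact Or.inr (eq_inv_of_mul_eq_one_right (by linear_combination h1))
  · exact absurd h1 (mul_ne_zero hz hw)

/-! ### Two algebra homs agree on a simple adjoin if they agree on the generator -/

lemma algHom_agree {K L M : Type*} [Field K] [Field L] [Field M] [Algebra K L] [Algebra K M]
    [FiniteDimensional K L] (f₁ f₂ : L →ₐ[K] M) {g x : L}
    (hg : f₁ g = f₂ g) (hx : x ∈ IntermediateField.adjoin K {g}) : f₁ x = f₂ x := by
  have hint : IsIntegral K g := Algebra.IsIntegral.isIntegral g
  rw [← IntermediateField.mem_toSubalgebra,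
    IntermediateField.adjoin_simple_toSubalgebra_of_isAlgebraic hint.isAlgebraic] at hx
  have : Algebra.adjoin K {g} ≤ AlgHom.equalizer f₁ f₂ :=
    Algebra.adjoin_le (by simpa using hg)
  exact this hx

/-! ### Number-theoretic core -/

lemma coprime_of_dvd4 {c m : ℕ} (hm : 0 < m) (hodd : ¬ 2 ∣ c) (h : Nat.gcd c m ∣ 4) :
    Nat.Coprime c m := by
  have h1 : Nat.gcd c m ∣ c := Nat.gcd_dvd_left _ _
  have hle : Nat.gcd c m ≤ 4 := Nat.le_of_dvd (by norm_num) h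
  have hpos : 0 < Nat.gcd c m := Nat.gcd_pos_of_pos_right _ hm
  interval_cases hh : Nat.gcd c m
  · exact Nat.coprime_iff_gcd_eq_one.mpr hh
  · exact absurd h1 hodd
  · norm_num at h
  · exact absurd (dvd_trans (by norm_num) h1) hodd

/-- For `m ≥ 3`, `m ∉ {3,4,6}`, there is a unit mod `m` different from `±1`. -/
lemma exists_unit_ne (m : ℕ) (hm : 3 ≤ m) (h346 : m ∉ ({3, 4, 6} : Set ℕ)) :
    ∃ c : ℕ, Nat.Coprime c m ∧ ¬ c ≡ 1 [MOD m] ∧ ¬ m ∣ (c + 1) := by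
  simp only [Set.mem_insert_iff, Set.mem_singleton_iff, not_or] at h346
  obtain ⟨h3, h4, h6⟩ := h346
  rcases Nat.even_or_odd m with hme | hmo
  · obtain ⟨k, hk⟩ := hme
    have hm8 : 8 ≤ m := by omega
    rcases Nat.even_or_odd (m / 2) with he | ho
    · obtain ⟨j, hj⟩ := he
      refine ⟨m / 2 - 1, ?_, ?_, ?_⟩
      · refine coprime_of_dvd4 (by omega) (by omega) ?_
        have h2 : Nat.gcd (m / 2 - 1) m ∣ 2 * (m / 2 - 1) :=
          Dvd.dvd.mul_left (Nat.gcd_dvd_left _ _) 2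
        have hd : Nat.gcd (m / 2 - 1) m ∣ m - 2 * (m / 2 - 1) :=
          Nat.dvd_sub (Nat.gcd_dvd_right _ _) h2
        have he2 : m - 2 * (m / 2 - 1) = 2 := by omega
        rw [he2] at hd
        exact dvd_trans hd (by norm_num)
      · intro h
        rw [Nat.ModEq, Nat.mod_eq_of_lt (by omega), Nat.mod_eq_of_lt (by omega)] at h
        omega
      · intro h
        have := Nat.le_of_dvd (by omega) h
        omega
    · obtain ⟨j, hj⟩ := ho
      refine ⟨m / 2 + 2, ?_, ?_, ?_⟩
      · refine coprime_of_dvd4 (by omega) (by omega) ?_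
        have h2 : Nat.gcd (m / 2 + 2) m ∣ 2 * (m / 2 + 2) :=
          Dvd.dvd.mul_left (Nat.gcd_dvd_left _ _) 2
        have hd : Nat.gcd (m / 2 + 2) m ∣ 2 * (m / 2 + 2) - m :=
          Nat.dvd_sub h2 (Nat.gcd_dvd_right _ _)
        have he2 : 2 * (m / 2 + 2) - m = 4 := by omega
        rwa [he2] at hd
      · intro h
        rw [Nat.ModEq, Nat.mod_eq_of_lt (by omega), Nat.mod_eq_of_lt (by omega)] at h
        omega
      · intro h
        have := Nat.le_of_dvd (by omega) h
        omega
  · obtain ⟨k, hk⟩ := hmo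
    have hm5 : 5 ≤ m := by omega
    refine ⟨2, ?_, ?_, ?_⟩
    · exact (Nat.prime_two.coprime_iff_not_dvd).2 (by omega)
    · intro h
      rw [Nat.ModEq, Nat.mod_eq_of_lt (by omega), Nat.mod_eq_of_lt (by omega)] at h
      omega
    · intro h
      have := Nat.le_of_dvd (by omega) h
      omega

lemma nt_key {m n : ℕ} (hm : 3 ≤ m) (hn : 3 ≤ n) (h346 : m ∉ ({3, 4, 6} : Set ℕ))
    (H : ∀ b : ℕ, Nat.Coprime b (Nat.lcm m n) → b ≡ 1 [MOD n] →
      (b ≡ 1 [MOD m] ∨ m ∣ (b + 1)))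
    {b : ℕ} (hb : Nat.Coprime b (Nat.lcm m n)) (hbn : b ≡ 1 [MOD n]) :
    b ≡ 1 [MOD m] := by
  by_contra hb1
  have hbm : m ∣ b + 1 := (H b hb hbn).resolve_left hb1
  set g := Nat.gcd m n with hg
  have hgpos : 0 < g := Nat.gcd_pos_of_pos_left _ (by omega)
  have hb1' : b ≥ 1 := by
    rcases Nat.eq_zero_or_pos b with rfl | h
    · exfalso
      have : (0 : ℕ) % n = 1 % n := hbn
      rw [Nat.zero_mod, Nat.mod_eq_of_lt (by omega)] at this
      omega
    · exact h
  have hnb : n ∣ b - 1 := (Nat.modEq_iff_dvd' hb1').1 hbn.symm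
  have hg2 : g ∣ 2 := by
    have h1 : g ∣ b + 1 := dvd_trans (Nat.gcd_dvd_left _ _) hbm
    have h2 : g ∣ b - 1 := dvd_trans (Nat.gcd_dvd_right _ _) hnb
    have h3 : g ∣ (b + 1) - (b - 1) := Nat.dvd_sub h1 h2
    have he : (b + 1) - (b - 1) = 2 := by omega
    rwa [he] at h3
  have hgcase : g = 1 ∨ g = 2 := by
    have := Nat.le_of_dvd (by norm_num) hg2
    interval_cases g
    · exact Or.inl rfl
    · exact Or.inr rfl
  obtain ⟨c, hc, hc1, hcm1⟩ := exists_unit_ne m hm h346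
  have hcpos : 1 ≤ c := by
    rcases Nat.eq_zero_or_pos c with rfl | h
    · exfalso
      have : Nat.gcd 0 m = m := Nat.gcd_zero_left m
      rw [Nat.Coprime, this] at hc
      omega
    · exact h
  have hgc : g ∣ c - 1 := by
    rcases hgcase with h | h
    · rw [h]; exact one_dvd _
    · have hm2 : 2 ∣ m := h ▸ Nat.gcd_dvd_left m n
      have hcodd : ¬ 2 ∣ c := by
        intro h2c
        have : 2 ∣ Nat.gcd c m := Nat.dvd_gcd h2c hm2
        rw [hc] at this
        omega
      rw [h]
      omega
  have hco : Nat.Coprime (n / g) (m / g) := by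
    have := Nat.coprime_div_gcd_div_gcd (m := n) (n := m) (by rwa [Nat.gcd_comm])
    rwa [Nat.gcd_comm] at this
  have hgm : g ∣ m := Nat.gcd_dvd_left m n
  have hgn : g ∣ n := Nat.gcd_dvd_right m n
  have hmg1 : 1 < m / g := by
    rcases hgcase with h | h <;> (rw [h] at hgm ⊢) <;> omega
  obtain ⟨u, -, hu⟩ := Nat.exists_mul_mod_eq_one_of_coprime hco hmg1
  have huM : (n / g) * u ≡ 1 [MOD m / g] := by
    rw [Nat.ModEq, hu, Nat.mod_eq_of_lt hmg1]
  set t := (c - 1) / g * u with ht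
  have hntc : n * t ≡ c - 1 [MOD m] := by
    have h1 : (n / g) * t ≡ (c - 1) / g [MOD m / g] := by
      have : (n / g) * t = (n / g) * u * ((c - 1) / g) := by rw [ht]; ring
      rw [this]
      simpa using huM.mul_right ((c - 1) / g)
    have h2 : g * ((n / g) * t) ≡ g * ((c - 1) / g) [MOD g * (m / g)] :=
      h1.mul_left' (c := g)
    rw [← mul_assoc, Nat.mul_div_cancel' hgn, Nat.mul_div_cancel' hgc,
      Nat.mul_div_cancel' hgm] at h2
    exact h2
  set b' := 1 + n * t with hb'
  have hb'n : b' ≡ 1 [MOD n] := by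
    rw [hb', Nat.ModEq, Nat.add_mul_mod_self_left]
  have hb'c : b' ≡ c [MOD m] := by
    have := (hntc.add_left 1)
    rwa [show 1 + (c - 1) = c by omega] at this
  have hb'cop : Nat.Coprime b' (Nat.lcm m n) := by
    have hbn' : Nat.Coprime b' n := by
      rw [hb', add_comm]
      simpa [Nat.Coprime] using (Nat.coprime_add_mul_right_left 1 n t).2 (Nat.one_coprime n)
    have hbm' : Nat.Coprime b' m := by
      have h1 : Nat.gcd m b' = Nat.gcd m c := by
        rw [Nat.gcd_rec m b', Nat.gcd_rec m c, show b' % m = c % m from hb'c]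
      rw [Nat.Coprime, Nat.gcd_comm, h1, Nat.gcd_comm]
      exact hc
    exact Nat.Coprime.coprime_dvd_right (Nat.lcm_dvd_mul m n) (hbm'.mul_right hbn')
  rcases H b' hb'cop hb'n with h | h
  · exact hc1 (hb'c.symm.trans h)
  · have : c + 1 ≡ 0 [MOD m] := (hb'c.symm.add_right 1).trans (Nat.modEq_zero_iff_dvd.2 h)
    exact hcm1 (Nat.modEq_zero_iff_dvd.1 this)

/-! ### Cyclotomic field setup -/

lemma zeta_integral (n : ℕ) (hn : n ≠ 0) : IsIntegral ℚ (zeta n) :=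
  (((zeta_prim hn).isIntegral (Nat.pos_of_ne_zero hn)).tower_top (R := ℤ))

lemma cyclField_isCyclo (N : ℕ) (hN : N ≠ 0) :
    IsCyclotomicExtension {N} ℚ (cyclField N) := by
  have hint := zeta_integral N hN
  have H := IntermediateField.adjoin_simple_toSubalgebra_of_isAlgebraic (F := ℚ) (α := zeta N) hint.isAlgebraic
  refine IsCyclotomicExtension.equiv _ _ _ (h := ?_) (.refl : (ℚ⟮zeta N⟯).toSubalgebra ≃ₐ[ℚ] _)
  rw [H]
  haveI : NeZero N := ⟨hN⟩
  have : IsPrimitiveRoot (zeta N) ((⟨N, Nat.pos_of_ne_zero hN⟩ : ℕ+) : ℕ) := zeta_prim hN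
  exact this.adjoin_isCyclotomicExtension ℚ

lemma galois {N : ℕ} (hN : N ≠ 0) : IsGalois ℚ (cyclField N) :=
  letI := cyclField_isCyclo N hN
  IsCyclotomicExtension.isGalois ({N} : Set ℕ) ℚ (cyclField N)

lemma finDim {N : ℕ} (hN : N ≠ 0) : FiniteDimensional ℚ (cyclField N) :=
  letI := cyclField_isCyclo N hN
  IsCyclotomicExtension.finiteDimensional {N} ℚ (cyclField N)

lemma pow_mod_helper {N : ℕ} {M : Type*} [CommMonoid M] {x : M} (h : x ^ N = 1) (b : ℕ) :
    x ^ (b % N) = x ^ b := by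
  conv_rhs => rw [← Nat.mod_add_div b N, pow_add, pow_mul, h, one_pow, mul_one]

lemma prim' {N : ℕ} (hN : N ≠ 0) :
    IsPrimitiveRoot (⟨zeta N, mem_adjoin_simple_self ℚ (zeta N)⟩ : cyclField N) N := by
  rw [← IsPrimitiveRoot.coe_submonoidClass_iff]
  exact zeta_prim hN

lemma mem_transfer {N : ℕ} {g' x' : cyclField N} :
    x' ∈ IntermediateField.adjoin ℚ {g'} ↔
      (x' : ℂ) ∈ IntermediateField.adjoin ℚ {(g' : ℂ)} := by
  have hmap := IntermediateField.adjoin_map ℚ {g'} (cyclField N).val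
  have himg : (cyclField N).val '' {g'} = {(g' : ℂ)} := by simp
  rw [himg] at hmap
  constructor
  · intro h
    rw [← hmap]
    exact ⟨_, h, rfl⟩
  · intro h
    rw [← hmap] at h
    obtain ⟨y, hy, hyx⟩ := h
    have : y = x' := Subtype.ext hyx
    rwa [this] at hy

/-- every automorphism raises ζ to its `autToPow` power -/
lemma aut_pow {N : ℕ} (hN : N ≠ 0) (σ : cyclField N ≃ₐ[ℚ] cyclField N) :
    haveI : NeZero N := ⟨hN⟩
    σ ⟨zeta N, mem_adjoin_simple_self ℚ (zeta N)⟩ =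
      (⟨zeta N, mem_adjoin_simple_self ℚ (zeta N)⟩ : cyclField N) ^
        (((prim' hN).autToPow ℚ σ : ZMod N)).val := by
  haveI : NeZero N := ⟨hN⟩
  exact ((prim' hN).autToPow_spec ℚ σ).symm

/-- existence of the automorphism `ζ ↦ ζ^b` for `b` coprime to `N`. -/
lemma exists_aut {N : ℕ} (hN : N ≠ 0) {b : ℕ} (hb : Nat.Coprime b N) :
    ∃ σ : cyclField N ≃ₐ[ℚ] cyclField N,
      σ ⟨zeta N, mem_adjoin_simple_self ℚ (zeta N)⟩ =
        (⟨zeta N, mem_adjoin_simple_self ℚ (zeta N)⟩ : cyclField N) ^ b := by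
  haveI : NeZero N := ⟨hN⟩
  set N' : ℕ+ := ⟨N, Nat.pos_of_ne_zero hN⟩ with hN'
  haveI := cyclField_isCyclo N hN
  have hirr : Irreducible (cyclotomic N' ℚ) := cyclotomic.irreducible_rat N'.pos
  set L := cyclField N
  haveI : IsCyclotomicExtension {(N' : ℕ)} ℚ L := this
  set ζ' : L := ⟨zeta N, mem_adjoin_simple_self ℚ (zeta N)⟩ with hζ'def
  have hζ' : IsPrimitiveRoot ζ' N := prim' hN
  have hbN' : Nat.Coprime b N' := hb
  set u : (ZMod (N' : ℕ))ˣ := ZMod.unitOfCoprime b hbN' with hu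
  set σ := (IsCyclotomicExtension.autEquivPow L hirr).symm u with hσ
  refine ⟨σ, ?_⟩
  have hζ₀ : IsPrimitiveRoot (IsCyclotomicExtension.zeta N' ℚ L) N' :=
    IsCyclotomicExtension.zeta_spec N' ℚ L
  have hspec : hζ₀.autToPow ℚ σ = u := by
    have := (IsCyclotomicExtension.autEquivPow L hirr).apply_symm_apply u
    rwa [IsCyclotomicExtension.autEquivPow_apply] at this
  have hval : ((u : ZMod (N' : ℕ))).val = b % N := by
    rw [hu, ZMod.coe_unitOfCoprime, ZMod.val_natCast]
    rfl
  have h0 : σ (IsCyclotomicExtension.zeta N' ℚ L) =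
      (IsCyclotomicExtension.zeta N' ℚ L) ^ (b % N) := by
    rw [← hval, ← hspec]
    exact (hζ₀.autToPow_spec ℚ σ).symm
  obtain ⟨j, _, hj⟩ := hζ₀.eq_pow_of_pow_eq_one (hζ'.pow_eq_one)
  have hpow1 : ((IsCyclotomicExtension.zeta N' ℚ L) ^ j) ^ N = 1 := by
    rw [hj]; exact hζ'.pow_eq_one
  rw [← hj, map_pow, h0, ← pow_mul, mul_comm (b % N) j, pow_mul]
  exact pow_mod_helper hpow1 b

section
variable {E : Type*} [Field E] [Algebra ℚ E] [FiniteDimensional ℚ E]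

lemma fix_adjoin (σ : E ≃ₐ[ℚ] E) {g x : E}
    (hg : σ g = g) (hx : x ∈ IntermediateField.adjoin ℚ {g}) : σ x = x := by
  have h := algHom_agree (σ.toAlgHom) (AlgHom.id ℚ E) (g := g) (by simpa using hg) hx
  simpa using h

omit [FiniteDimensional ℚ E] in
lemma mem_fixedField_iff (H : Subgroup (E ≃ₐ[ℚ] E)) (x : E) :
    x ∈ IntermediateField.fixedField H ↔ ∀ σ : H, (σ : E ≃ₐ[ℚ] E) x = x := Iff.rfl

end

lemma pow_eq_self_iff_modEq {M : Type*} [CommRing M] [IsDomain M] {ζ : M} {n : ℕ}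
    (hn : n ≠ 0) (hζ : IsPrimitiveRoot ζ n) {b : ℕ} (hb : 1 ≤ b) :
    ζ ^ b = ζ ↔ b ≡ 1 [MOD n] := by
  constructor
  · intro h
    have hζ0 : ζ ≠ 0 := hζ.ne_zero hn
    have h1 : ζ ^ (b - 1) * ζ = 1 * ζ := by
      rw [← pow_succ, Nat.sub_add_cancel hb, h, one_mul]
    have h2 := mul_right_cancel₀ hζ0 h1
    have hdvd : n ∣ b - 1 := (hζ.pow_eq_one_iff_dvd _).1 h2
    exact ((Nat.modEq_iff_dvd' hb).2 hdvd).symm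
  · intro h
    have hdvd : n ∣ b - 1 := (Nat.modEq_iff_dvd' hb).1 h.symm
    obtain ⟨k, hk⟩ := hdvd
    have hbe : b = n * k + 1 := by omega
    rw [hbe, pow_add, pow_mul, hζ.pow_eq_one, one_pow, pow_one, one_mul]

/-- For `m, n ≥ 3`: `k_m ⊆ k_n` iff `ℚ(ζ_m) ⊆ ℚ(ζ_n)` or `m ∈ {3,4,6}`. -/
theorem realCyclField_le_iff (m n : ℕ) (hm : 3 ≤ m) (hn : 3 ≤ n) :
    realCyclField m ≤ realCyclField n ↔
      (cyclField m ≤ cyclField n ∨ m ∈ ({3, 4, 6} : Set ℕ)) := by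
  have hm0 : m ≠ 0 := by omega
  have hn0 : n ≠ 0 := by omega
  by_cases h346 : m ∈ ({3, 4, 6} : Set ℕ)
  · constructor
    · intro _
      exact Or.inr h346
    · intro _
      obtain ⟨q, hq⟩ := zeta_add_inv_rat m (by simpa using h346)
      rw [realCyclField, IntermediateField.adjoin_le_iff, Set.singleton_subset_iff]
      rw [hq]
      have hcast : ((q : ℂ)) = algebraMap ℚ ℂ q := by norm_num
      rw [hcast]
      exact IntermediateField.algebraMap_mem (realCyclField n) q
  -- main case
  set N := Nat.lcm m n with hNdef
  have hN : N ≠ 0 := Nat.lcm_ne_zero (by omega) (by omega)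
  have hmN : m ∣ N := Nat.dvd_lcm_left m n
  have hnN : n ∣ N := Nat.dvd_lcm_right m n
  haveI : FiniteDimensional ℚ (cyclField N) := finDim hN
  haveI : IsGalois ℚ (cyclField N) := galois hN
  haveI : NeZero N := ⟨hN⟩
  have hζNmem : zeta N ∈ cyclField N := IntermediateField.mem_adjoin_simple_self ℚ (zeta N)
  set ζN : cyclField N := ⟨zeta N, hζNmem⟩ with hζNd
  have hζmC : zeta m ∈ cyclField N := by
    rw [← zeta_pow_div hm0 hN hmN]; exact pow_mem hζNmem _
  have hζnC : zeta n ∈ cyclField N := by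
    rw [← zeta_pow_div hn0 hN hnN]; exact pow_mem hζNmem _
  set ζm : cyclField N := ⟨zeta m, hζmC⟩ with hζmd
  set ζn : cyclField N := ⟨zeta n, hζnC⟩ with hζnd
  have hζm_pow : ζN ^ (N / m) = ζm :=
    Subtype.ext (by push_cast; exact zeta_pow_div hm0 hN hmN)
  have hζn_pow : ζN ^ (N / n) = ζn :=
    Subtype.ext (by push_cast; exact zeta_pow_div hn0 hN hnN)
  have hζmp : IsPrimitiveRoot ζm m := by
    rw [← IsPrimitiveRoot.coe_submonoidClass_iff]; exact zeta_prim hm0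
  have hζnp : IsPrimitiveRoot ζn n := by
    rw [← IsPrimitiveRoot.coe_submonoidClass_iff]; exact zeta_prim hn0
  have hζm0 : ζm ≠ 0 := fun h => zeta_ne_zero m (congrArg Subtype.val h)
  have hζn0 : ζn ≠ 0 := fun h => zeta_ne_zero n (congrArg Subtype.val h)
  set sm : cyclField N := ζm + ζm⁻¹ with hsmd
  set sn : cyclField N := ζn + ζn⁻¹ with hsnd
  have hsm_coe : (sm : ℂ) = zeta m + (zeta m)⁻¹ := by push_cast; rfl
  have hsn_coe : (sn : ℂ) = zeta n + (zeta n)⁻¹ := by push_cast; rfl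
  constructor
  · -- forward direction
    intro hreal
    left
    have hsmreal : zeta m + (zeta m)⁻¹ ∈ realCyclField n :=
      hreal (IntermediateField.mem_adjoin_simple_self ℚ _)
    have hsm_in : sm ∈ IntermediateField.adjoin ℚ {sn} := by
      rw [mem_transfer, hsm_coe, hsn_coe]
      exact hsmreal
    -- key congruence property
    have H : ∀ b : ℕ, Nat.Coprime b N → b ≡ 1 [MOD n] → (b ≡ 1 [MOD m] ∨ m ∣ (b + 1)) := by
      intro b hb hbn
      have hb1 : 1 ≤ b := by
        rcases Nat.eq_zero_or_pos b with rfl | h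
        · rw [Nat.coprime_zero_left] at hb
          rw [hb] at hnN
          have := Nat.le_of_dvd one_pos hnN
          omega
        · exact h
      obtain ⟨σ, hσ0⟩ := exists_aut hN hb
      have hσ : σ ζN = ζN ^ b := hσ0
      have hσm : σ ζm = ζm ^ b := by
        rw [← hζm_pow, map_pow, hσ, ← pow_mul, mul_comm b (N / m), pow_mul, hζm_pow]
      have hσn : σ ζn = ζn ^ b := by
        rw [← hζn_pow, map_pow, hσ, ← pow_mul, mul_comm b (N / n), pow_mul, hζn_pow]
      have hζnb : ζn ^ b = ζn := (pow_eq_self_iff_modEq hn0 hζnp hb1).2 hbn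
      have hσsn : σ sn = sn := by
        rw [hsnd, map_add, map_inv₀, hσn, hζnb]
      have hfix : σ sm = sm := fix_adjoin σ hσsn hsm_in
      have hkey : ζm ^ b + (ζm ^ b)⁻¹ = ζm + ζm⁻¹ := by
        rw [hsmd] at hfix
        rw [map_add, map_inv₀, hσm] at hfix
        exact hfix
      rcases quad_root (pow_ne_zero _ hζm0) hζm0 hkey with h1 | h1
      · exact Or.inl ((pow_eq_self_iff_modEq hm0 hζmp hb1).1 h1)
      · right
        have : ζm ^ (b + 1) = 1 := by
          rw [pow_succ, h1, inv_mul_cancel₀ hζm0]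
        exact (hζmp.pow_eq_one_iff_dvd _).1 this
    -- Galois descent
    rw [cyclField, IntermediateField.adjoin_le_iff, Set.singleton_subset_iff]
    have hmem : ζm ∈ IntermediateField.adjoin ℚ {ζn} := by
      rw [← IsGalois.fixedField_fixingSubgroup (IntermediateField.adjoin ℚ {ζn}),
        _root_.mem_fixedField_iff]
      rintro ⟨σ, hσmem⟩
      show σ ζm = ζm
      have hfixn : σ ζn = ζn := by
        exact (IntermediateField.mem_fixingSubgroup_iff _ σ).1 hσmem ζn
          (IntermediateField.mem_adjoin_simple_self ℚ ζn)
      set v := (((prim' hN).autToPow ℚ σ : ZMod N)).val with hv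
      have hσN : σ ζN = ζN ^ v := aut_pow hN σ
      have hvcop : Nat.Coprime v N := ZMod.val_coe_unit_coprime _
      have hv1 : 1 ≤ v := by
        rcases Nat.eq_zero_or_pos v with he | h
        · rw [he, Nat.coprime_zero_left] at hvcop
          rw [hvcop] at hnN
          have := Nat.le_of_dvd one_pos hnN
          omega
        · exact h
      have hσn : σ ζn = ζn ^ v := by
        rw [← hζn_pow, map_pow, hσN, ← pow_mul, mul_comm v (N / n), pow_mul, hζn_pow]
      have hv1n : v ≡ 1 [MOD n] :=
        (pow_eq_self_iff_modEq hn0 hζnp hv1).1 (hσn ▸ hfixn)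
      have hv1m : v ≡ 1 [MOD m] := nt_key hm hn h346 H hvcop hv1n
      rw [← hζm_pow, map_pow, hσN, ← pow_mul, mul_comm v (N / m), pow_mul, hζm_pow]
      exact (pow_eq_self_iff_modEq hm0 hζmp hv1).2 hv1m
    rw [mem_transfer] at hmem
    exact hmem
  · -- reverse direction
    rintro (hcyc | habs)
    swap
    · exact absurd habs h346
    rw [realCyclField, IntermediateField.adjoin_le_iff, Set.singleton_subset_iff]
    have hζm_in : ζm ∈ IntermediateField.adjoin ℚ {ζn} := by
      rw [mem_transfer]
      exact hcyc (IntermediateField.mem_adjoin_simple_self ℚ (zeta m))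
    have hmem : sm ∈ IntermediateField.adjoin ℚ {sn} := by
      rw [← IsGalois.fixedField_fixingSubgroup (IntermediateField.adjoin ℚ {sn}),
        _root_.mem_fixedField_iff]
      rintro ⟨σ, hσmem⟩
      show σ sm = sm
      have hfixsn : σ sn = sn := by
        exact (IntermediateField.mem_fixingSubgroup_iff _ σ).1 hσmem sn
          (IntermediateField.mem_adjoin_simple_self ℚ sn)
      have hσn0 : σ ζn ≠ 0 := fun h => hζn0 (by simpa using σ.injective (h.trans (map_zero σ).symm))
      have hqr : σ ζn = ζn ∨ σ ζn = ζn⁻¹ := by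
        refine quad_root hσn0 hζn0 ?_
        have := hfixsn
        rw [hsnd, map_add, map_inv₀] at this
        exact this
      rcases hqr with h1 | h1
      · have hfm : σ ζm = ζm := fix_adjoin σ h1 hζm_in
        rw [hsmd, map_add, map_inv₀, hfm]
      · -- conjugation case
        have hg : ((cyclField N).val.comp σ.toAlgHom) ζn =
            (((starRingEnd ℂ).toRatAlgHom).comp (cyclField N).val) ζn := by
          show ((σ ζn : cyclField N) : ℂ) = (starRingEnd ℂ) (zeta n)
          rw [h1, conj_zeta]
          push_cast
          rfl
        have hcval := algHom_agree _ _ hg hζm_in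
        have hσζm : σ ζm = ζm⁻¹ := by
          apply Subtype.ext
          have h2 : ((σ ζm : cyclField N) : ℂ) = (starRingEnd ℂ) (zeta m) := hcval
          rw [show ((ζm⁻¹ : cyclField N) : ℂ) = (zeta m)⁻¹ by push_cast; rfl, h2, conj_zeta]
        rw [hsmd, map_add, map_inv₀, hσζm, inv_inv, add_comm]
    rw [mem_transfer, hsm_coe, hsn_coe] at hmem
    exact hmem
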